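/- The map φ from the open set X = {(α, β, γ) ∈ ℝ³ : α, β, γ > 0, α + β + γ = π} to the upper half-plane given by φ(α, β, γ) = (sin β / sin γ) · e^{iα} is a bijection onto ℍ. -/

import Mathlib

open Real Complex

noncomputable def gammaInv (w : ℂ) : ℝ :=
  Real.pi / 2 - Real.arctan ((‖w‖ - Real.cos w.arg) / Real.sin w.arg)

noncomputable def psiInv (w : ℂ) : ℝ × ℝ × ℝ :=
  (w.arg, Real.pi - w.arg - gammaInv w, gammaInv w)

lemma phi_im (r α : ℝ) : ((r:ℂ) * Complex.exp (α * Complex.I)).im = r * Real.sin α := by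
  simp [Complex.exp_mul_I, Complex.mul_im, ← Complex.ofReal_cos, ← Complex.ofReal_sin,
    Complex.add_im, Complex.mul_I_im]

lemma abs_phi (r α : ℝ) (hr : 0 < r) : ‖(r:ℂ) * Complex.exp (α * Complex.I)‖ = r := by
  rw [norm_mul, Complex.norm_exp_ofReal_mul_I, Complex.norm_real, Real.norm_eq_abs, abs_of_pos hr, mul_one]

lemma arg_phi (r α : ℝ) (hr : 0 < r) (h1 : 0 < α) (h2 : α < Real.pi) :
    ((r:ℂ) * Complex.exp (α * Complex.I)).arg = α := by
  rw [Complex.arg_real_mul _ hr, Complex.exp_mul_I,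
    Complex.arg_cos_add_sin_mul_I ⟨by linarith [Real.pi_pos], h2.le⟩]

lemma arg_pos_of_im_pos {w : ℂ} (hw : 0 < w.im) : 0 < w.arg := by
  by_contra h
  push_neg at h
  have h1 : Real.sin w.arg ≤ 0 :=
    Real.sin_nonpos_of_nonpos_of_neg_pi_le h (Complex.neg_pi_lt_arg w).le
  rw [Complex.sin_arg] at h1
  have habs : (0:ℝ) < ‖w‖ := norm_pos_iff.mpr (by intro h0; simp [h0] at hw)
  nlinarith [div_pos hw habs]

lemma arg_lt_pi_of_im_pos {w : ℂ} (hw : 0 < w.im) : w.arg < Real.pi := by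
  rcases lt_or_eq_of_le (Complex.arg_le_pi w) with h | h
  · exact h
  · exfalso
    have h1 := Complex.sin_arg w
    rw [h, Real.sin_pi] at h1
    have habs : (0:ℝ) < ‖w‖ := norm_pos_iff.mpr (by intro h0; simp [h0] at hw)
    have := div_pos hw habs
    linarith

lemma sin_arg_pos' {w : ℂ} (hw : 0 < w.im) : 0 < Real.sin w.arg :=
  Real.sin_pos_of_pos_of_lt_pi (arg_pos_of_im_pos hw) (arg_lt_pi_of_im_pos hw)

lemma gammaInv_pos (w : ℂ) : 0 < gammaInv w := by
  have := Real.arctan_lt_pi_div_two ((‖w‖ - Real.cos w.arg) / Real.sin w.arg)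
  unfold gammaInv; linarith

lemma gammaInv_lt_pi (w : ℂ) : gammaInv w < Real.pi := by
  have := Real.neg_pi_div_two_lt_arctan ((‖w‖ - Real.cos w.arg) / Real.sin w.arg)
  unfold gammaInv; linarith

lemma beta_pos {w : ℂ} (hw : 0 < w.im) : 0 < Real.pi - w.arg - gammaInv w := by
  set α := w.arg with hαdef
  have hα1 : 0 < α := arg_pos_of_im_pos hw
  have hα2 : α < Real.pi := arg_lt_pi_of_im_pos hw
  have hs : 0 < Real.sin α := sin_arg_pos' hw
  have habs : (0:ℝ) < ‖w‖ := norm_pos_iff.mpr (by intro h0; simp [h0] at hw)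
  have key : α - Real.pi / 2 < Real.arctan ((‖w‖ - Real.cos α) / Real.sin α) := by
    have h1 : α - Real.pi / 2 = Real.arctan (Real.tan (α - Real.pi / 2)) :=
      (Real.arctan_tan (by linarith) (by linarith)).symm
    rw [h1]
    apply Real.arctan_strictMono
    have ht : Real.tan (α - Real.pi / 2) = -Real.cos α / Real.sin α := by
      rw [Real.tan_eq_sin_div_cos, show α - Real.pi / 2 = -(Real.pi / 2 - α) by ring,
        Real.sin_neg, Real.cos_neg, Real.sin_pi_div_two_sub, Real.cos_pi_div_two_sub]
    rw [ht]
    exact div_lt_div_of_pos_right (by linarith) hs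
  unfold gammaInv
  linarith

-- cot of gammaInv
lemma cos_div_sin_gammaInv (w : ℂ) :
    Real.cos (gammaInv w) / Real.sin (gammaInv w)
      = (‖w‖ - Real.cos w.arg) / Real.sin w.arg := by
  unfold gammaInv
  rw [Real.cos_pi_div_two_sub, Real.sin_pi_div_two_sub, ← Real.tan_eq_sin_div_cos,
    Real.tan_arctan]

theorem angle_parametrisation_bijective :
    Set.BijOn
      (fun p : ℝ × ℝ × ℝ =>
        ((Real.sin p.2.1 / Real.sin p.2.2 : ℝ) : ℂ) * Complex.exp (p.1 * Complex.I))
      {p : ℝ × ℝ × ℝ | 0 < p.1 ∧ 0 < p.2.1 ∧ 0 < p.2.2 ∧ p.1 + p.2.1 + p.2.2 = Real.pi}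
      {w : ℂ | 0 < w.im} := by
  set f := fun p : ℝ × ℝ × ℝ =>
        ((Real.sin p.2.1 / Real.sin p.2.2 : ℝ) : ℂ) * Complex.exp (p.1 * Complex.I)
  have hmapsto : Set.MapsTo f
      {p : ℝ × ℝ × ℝ | 0 < p.1 ∧ 0 < p.2.1 ∧ 0 < p.2.2 ∧ p.1 + p.2.1 + p.2.2 = Real.pi}
      {w : ℂ | 0 < w.im} := by
    rintro ⟨α, β, γ⟩ ⟨hα, hβ, hγ, hsum⟩
    show (0:ℝ) < (((Real.sin β / Real.sin γ : ℝ):ℂ) * Complex.exp ((α:ℝ) * Complex.I)).im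
    rw [phi_im]
    have hsβ : 0 < Real.sin β := Real.sin_pos_of_pos_of_lt_pi hβ (by linarith)
    have hsγ : 0 < Real.sin γ := Real.sin_pos_of_pos_of_lt_pi hγ (by linarith)
    have hsα : 0 < Real.sin α := Real.sin_pos_of_pos_of_lt_pi hα (by linarith)
    positivity
  have hmapsto' : Set.MapsTo psiInv {w : ℂ | 0 < w.im}
      {p : ℝ × ℝ × ℝ | 0 < p.1 ∧ 0 < p.2.1 ∧ 0 < p.2.2 ∧ p.1 + p.2.1 + p.2.2 = Real.pi} := by
    intro w hw
    simp only [Set.mem_setOf_eq] at hw ⊢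
    exact ⟨arg_pos_of_im_pos hw, beta_pos hw, gammaInv_pos w, by simp [psiInv]; ring⟩
  have hinv : Set.InvOn psiInv f
      {p : ℝ × ℝ × ℝ | 0 < p.1 ∧ 0 < p.2.1 ∧ 0 < p.2.2 ∧ p.1 + p.2.1 + p.2.2 = Real.pi}
      {w : ℂ | 0 < w.im} := by
    constructor
    · -- left inverse
      rintro ⟨α, β, γ⟩ ⟨hα, hβ, hγ, hsum⟩
      have hsβ : 0 < Real.sin β := Real.sin_pos_of_pos_of_lt_pi hβ (by linarith)
      have hsγ : 0 < Real.sin γ := Real.sin_pos_of_pos_of_lt_pi hγ (by linarith)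
      have hsα : 0 < Real.sin α := Real.sin_pos_of_pos_of_lt_pi hα (by linarith)
      have hr : 0 < Real.sin β / Real.sin γ := div_pos hsβ hsγ
      have harg : (f (α, β, γ)).arg = α := arg_phi _ _ hr hα (by linarith)
      have habs : ‖f (α, β, γ)‖ = Real.sin β / Real.sin γ := abs_phi _ _ hr
      -- compute t
      have hβeq : β = Real.pi - (α + γ) := by linarith
      have hsinβ : Real.sin β = Real.sin α * Real.cos γ + Real.cos α * Real.sin γ := by
        rw [hβeq, Real.sin_pi_sub, Real.sin_add]
      have ht : (‖f (α, β, γ)‖ - Real.cos ((f (α, β, γ)).arg))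
            / Real.sin ((f (α, β, γ)).arg) = Real.cos γ / Real.sin γ := by
        rw [harg, habs, hsinβ]
        field_simp
        ring
      have hg : gammaInv (f (α, β, γ)) = γ := by
        unfold gammaInv
        have hcot : Real.cos γ / Real.sin γ = Real.tan (Real.pi / 2 - γ) := by
          rw [Real.tan_eq_sin_div_cos, Real.sin_pi_div_two_sub, Real.cos_pi_div_two_sub]
        rw [ht, hcot, Real.arctan_tan (by linarith) (by linarith)]
        ring
      show psiInv (f (α, β, γ)) = (α, β, γ)
      simp [psiInv, harg, hg]
      linarith
    · -- right inverse
      intro w hw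
      simp only [Set.mem_setOf_eq] at hw
      set α := w.arg with hαdef
      have hα1 : 0 < α := arg_pos_of_im_pos hw
      have hα2 : α < Real.pi := arg_lt_pi_of_im_pos hw
      have hs : 0 < Real.sin α := sin_arg_pos' hw
      have hsγ : 0 < Real.sin (gammaInv w) :=
        Real.sin_pos_of_pos_of_lt_pi (gammaInv_pos w) (gammaInv_lt_pi w)
      have hsinβ : Real.sin (Real.pi - α - gammaInv w)
          = Real.sin α * Real.cos (gammaInv w) + Real.cos α * Real.sin (gammaInv w) := by
        rw [show Real.pi - α - gammaInv w = Real.pi - (α + gammaInv w) by ring,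
          Real.sin_pi_sub, Real.sin_add]
      have hrw : Real.sin (Real.pi - α - gammaInv w) / Real.sin (gammaInv w)
          = ‖w‖ := by
        rw [hsinβ]
        have hcd := cos_div_sin_gammaInv w
        rw [← hαdef] at hcd
        field_simp
        field_simp at hcd
        nlinarith [hcd]
      show (((Real.sin (Real.pi - α - gammaInv w) / Real.sin (gammaInv w) : ℝ)):ℂ)
          * Complex.exp ((α:ℝ) * Complex.I) = w
      rw [hrw, hαdef]
      exact Complex.norm_mul_exp_arg_mul_I w
  exact Set.InvOn.bijOn hinv hmapsto hmapsto'
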